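/- Let (X, ℬ, μ) be a purely atomic probability space, k ∈ ℕ, and {α_j : j ∈ ℕ} a sequence of finite measurable partitions of X each with at most k atoms. Then (1/n)·H_μ(⋁_{j=1}^{n} α_j) → 0 as n → ∞, where H_μ(β) = −∑_{B∈β} μ(B) log μ(B) denotes Shannon entropy of the partition β. -/

import Mathlib

open MeasureTheory
open scoped ENNReal

/-- A probability space is purely atomic: there is a countable family of measurable
sets of full total measure on each of which every measurable subset has either zero
or full measure. -/
def PurelyAtomic {X : Type*} [MeasurableSpace X] (μ : Measure X) : Prop :=
  ∃ D : ℕ → Set X, (∀ i, MeasurableSet (D i)) ∧ μ (⋃ i, D i) = 1 ∧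
    ∀ i, ∀ s : Set X, s ⊆ D i → MeasurableSet s → μ s = 0 ∨ μ s = μ (D i)

/-- Shannon entropy of the join `⋁_{j<n} α_j` of partitions encoded as measurable
maps `P j : X → Fin k`: the cells of the join are the joint preimages. -/
noncomputable def joinEntropy {X : Type*} [MeasurableSpace X] (μ : Measure X)
    {k : ℕ} (P : ℕ → X → Fin k) (n : ℕ) : ℝ :=
  ∑ c : Fin n → Fin k,
    Real.negMulLog ((μ (⋂ j : Fin n, (P j) ⁻¹' {c j})).toReal)


lemma negMulLog_add_le {a b : ℝ} (ha : 0 ≤ a) (hb : 0 ≤ b) :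
    Real.negMulLog (a + b) ≤ Real.negMulLog a + Real.negMulLog b := by
  rcases ha.eq_or_lt with rfl|ha'
  · simp
  rcases hb.eq_or_lt with rfl|hb'
  · simp
  have h1 : Real.log a ≤ Real.log (a + b) := Real.log_le_log ha' (by linarith)
  have h2 : Real.log b ≤ Real.log (a + b) := Real.log_le_log hb' (by linarith)
  simp only [Real.negMulLog, neg_mul]
  nlinarith

lemma negMulLog_le_one {x : ℝ} (hx : 0 ≤ x) : Real.negMulLog x ≤ 1 := by
  rcases hx.eq_or_lt with rfl|hx'
  · simp
  have h := Real.log_le_sub_one_of_pos (x := x⁻¹) (by positivity)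
  rw [Real.log_inv] at h
  have : Real.negMulLog x = x * (-Real.log x) := by simp [Real.negMulLog]
  rw [this]
  have : x * (-Real.log x) ≤ x * (x⁻¹ - 1) := by
    apply mul_le_mul_of_nonneg_left _ hx
    linarith
  calc x * (-Real.log x) ≤ x * (x⁻¹ - 1) := this
    _ = 1 - x := by field_simp
    _ ≤ 1 := by linarith

lemma sum_negMulLog_le {ι : Type*} [Fintype ι] [Nonempty ι] (g : ι → ℝ) (hg : ∀ c, 0 ≤ g c) :
    ∑ c, Real.negMulLog (g c) ≤
      Real.negMulLog (∑ c, g c) + (∑ c, g c) * Real.log (Fintype.card ι) := by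
  set m : ℝ := (Fintype.card ι : ℝ) with hm
  have hm0 : 0 < m := by
    have := Fintype.card_pos (α := ι)
    positivity
  have jensen := Real.concaveOn_negMulLog.le_map_sum (t := Finset.univ)
    (w := fun _ : ι => m⁻¹) (p := g) (fun _ _ => by positivity)
    (by simp [Finset.card_univ]; rw [← hm]; exact mul_inv_cancel₀ hm0.ne') (fun c _ => hg c)
  simp only [smul_eq_mul, ← Finset.mul_sum] at jensen
  have h2 : Real.negMulLog (m⁻¹ * (∑ c, g c)) =
      (∑ c, g c) * Real.negMulLog m⁻¹ + m⁻¹ * Real.negMulLog (∑ c, g c) := by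
    rw [Real.negMulLog_mul]
  have h3 : Real.negMulLog m⁻¹ = m⁻¹ * Real.log m := by
    simp [Real.negMulLog, Real.log_inv]
  rw [h2, h3] at jensen
  have := mul_le_mul_of_nonneg_left jensen hm0.le
  calc ∑ c, Real.negMulLog (g c) = m * (m⁻¹ * ∑ c, Real.negMulLog (g c)) := by
        field_simp
    _ ≤ m * ((∑ c, g c) * (m⁻¹ * Real.log m) + m⁻¹ * Real.negMulLog (∑ c, g c)) := this
    _ = Real.negMulLog (∑ c, g c) + (∑ c, g c) * Real.log m := by field_simp; ring

/-- On a purely atomic probability space, for any sequence of finite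
measurable partitions each with at most `k` atoms (encoded as measurable maps into
`Fin k`), `(1/n)·H_μ(⋁_{j<n} α_j) → 0`. -/
theorem stmt8 {X : Type*} [MeasurableSpace X] (μ : Measure X) [IsProbabilityMeasure μ]
    (hatomic : PurelyAtomic μ) (k : ℕ)
    (P : ℕ → X → Fin k) (hmeas : ∀ j, Measurable (P j)) :
    Filter.Tendsto (fun n : ℕ => (1 / (n : ℝ)) * joinEntropy μ P n)
      Filter.atTop (nhds 0) := by
  classical
  -- X is nonempty, hence k ≥ 1
  have hX : Nonempty X := by
    by_contra h
    rw [not_nonempty_iff] at h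
    have : μ Set.univ = 1 := measure_univ
    rw [Set.univ_eq_empty_iff.2 h, measure_empty] at this
    exact zero_ne_one this
  have hFk : Nonempty (Fin k) := ⟨P 0 hX.some⟩
  have hk : 1 ≤ k := hFk.some.pos
  -- disjointified atoms
  obtain ⟨D, hDm, hD1, hDatom⟩ := hatomic
  set E : ℕ → Set X := disjointed D with hE
  have hEm : ∀ i, MeasurableSet (E i) := MeasurableSet.disjointed hDm
  have hED : ∀ i, E i ⊆ D i := fun i => disjointed_subset D i
  have hEdis : Pairwise (Function.onFun Disjoint E) := disjoint_disjointed D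
  have hEU : μ (⋃ i, E i) = 1 := by rw [hE, iUnion_disjointed]; exact hD1
  have hEatom : ∀ i, ∀ s ⊆ E i, MeasurableSet s → μ s = 0 ∨ μ s = μ (E i) := by
    intro i s hs hsm
    rcases hDatom i s (hs.trans (hED i)) hsm with h | h
    · exact Or.inl h
    · exact Or.inr (le_antisymm (measure_mono hs) (h ▸ measure_mono (hED i)))
  -- colors
  have hcolor : ∀ i j, ∃ c : Fin k, μ (E i) ≠ 0 → μ (E i ∩ P j ⁻¹' {c}) = μ (E i) := by
    intro i j
    by_cases h0 : μ (E i) = 0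
    · exact ⟨hFk.some, fun h => absurd h0 h⟩
    by_contra hc
    push_neg at hc
    have hz : ∀ c : Fin k, μ (E i ∩ P j ⁻¹' {c}) = 0 := by
      intro c
      rcases hEatom i _ Set.inter_subset_left
        ((hEm i).inter ((hmeas j) (measurableSet_singleton c))) with h | h
      · exact h
      · exact absurd h (hc c).2
    have hcover : E i ⊆ ⋃ c : Fin k, E i ∩ P j ⁻¹' {c} := fun x hx =>
      Set.mem_iUnion.2 ⟨P j x, hx, rfl⟩
    have : μ (E i) = 0 :=
      le_antisymm ((measure_mono hcover).trans (measure_iUnion_null hz).le) (by simp)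
    exact h0 this
  choose f hf using hcolor
  -- within an atom, each partition map is a.e. constant
  have hnullj : ∀ i j, μ (E i) ≠ 0 → μ (E i \ P j ⁻¹' {f i j}) = 0 := by
    intro i j h0
    have hA : MeasurableSet (P j ⁻¹' {f i j}) := (hmeas j) (measurableSet_singleton _)
    have h1 : μ (E i ∩ P j ⁻¹' {f i j}) + μ (E i \ P j ⁻¹' {f i j}) = μ (E i) :=
      measure_inter_add_diff (E i) hA
    rw [hf i j h0] at h1
    have hfin : μ (E i) ≠ ⊤ := measure_ne_top μ _
    have := ENNReal.add_right_inj hfin (b := μ (E i \ P j ⁻¹' {f i j})) (c := 0)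
    rw [add_zero] at this
    exact this.1 h1
  -- atom ∩ cell measure
  have hcell : ∀ (n : ℕ) (c : Fin n → Fin k) (i : ℕ),
      μ (E i ∩ ⋂ j : Fin n, P (j : ℕ) ⁻¹' {c j}) =
        if (fun j : Fin n => f i (j : ℕ)) = c then μ (E i) else 0 := by
    intro n c i
    by_cases h0 : μ (E i) = 0
    · have hz : μ (E i ∩ ⋂ j : Fin n, P (j : ℕ) ⁻¹' {c j}) = 0 :=
        measure_mono_null Set.inter_subset_left h0
      rw [hz, h0]
      simp
    by_cases hmatch : (fun j : Fin n => f i (j : ℕ)) = c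
    · rw [if_pos hmatch]
      have hnull : μ (⋃ j : Fin n, E i \ P (j : ℕ) ⁻¹' {c j}) = 0 := by
        apply measure_iUnion_null
        intro j
        have h := hnullj i (j : ℕ) h0
        rw [congrFun hmatch j] at h
        exact h
      apply le_antisymm (measure_mono Set.inter_subset_left)
      calc μ (E i) ≤ μ (E i ∩ ⋂ j : Fin n, P (j : ℕ) ⁻¹' {c j})
            + μ (E i \ ⋂ j : Fin n, P (j : ℕ) ⁻¹' {c j}) := measure_le_inter_add_diff μ _ _
        _ = μ (E i ∩ ⋂ j : Fin n, P (j : ℕ) ⁻¹' {c j}) := by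
            have hz : μ (E i \ ⋂ j : Fin n, P (j : ℕ) ⁻¹' {c j}) = 0 := by
              rw [Set.diff_iInter]
              exact hnull
            rw [hz, add_zero]
    · rw [if_neg hmatch]
      rw [funext_iff] at hmatch
      push_neg at hmatch
      obtain ⟨j, hj⟩ := hmatch
      apply measure_mono_null _ (hnullj i (j : ℕ) h0)
      rintro x ⟨hxE, hxC⟩
      refine ⟨hxE, fun hxA => ?_⟩
      have hc : P (j : ℕ) x = c j := Set.mem_iInter.1 hxC j
      have hfj : P (j : ℕ) x = f i (j : ℕ) := hxA
      exact hj (hfj ▸ hc)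
  -- cell measure as sum over atoms
  have hcellμ : ∀ (n : ℕ) (c : Fin n → Fin k),
      μ (⋂ j : Fin n, P (j : ℕ) ⁻¹' {c j}) =
        ∑' i, μ (E i ∩ ⋂ j : Fin n, P (j : ℕ) ⁻¹' {c j}) := by
    intro n c
    set C := ⋂ j : Fin n, P (j : ℕ) ⁻¹' {c j} with hC
    have hCm : MeasurableSet C :=
      MeasurableSet.iInter fun j => (hmeas (j : ℕ)) (measurableSet_singleton _)
    have hUm : MeasurableSet (⋃ i, E i) := MeasurableSet.iUnion hEm
    have hUc : μ (⋃ i, E i)ᶜ = 0 := by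
      rw [prob_compl_eq_zero_iff hUm]
      exact hEU
    have h1 : μ C = μ (C ∩ ⋃ i, E i) := by
      apply le_antisymm _ (measure_mono Set.inter_subset_left)
      calc μ C ≤ μ (C ∩ ⋃ i, E i) + μ (C \ ⋃ i, E i) := measure_le_inter_add_diff μ _ _
        _ = μ (C ∩ ⋃ i, E i) := by
            have : μ (C \ ⋃ i, E i) = 0 :=
              measure_mono_null (fun x hx => hx.2) hUc
            rw [this, add_zero]
    rw [h1, Set.inter_iUnion,
      measure_iUnion
        (fun a b hab => (hEdis hab).mono Set.inter_subset_right Set.inter_subset_right)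
        (fun i => hCm.inter (hEm i))]
    exact tsum_congr fun i => by rw [Set.inter_comm]
  -- real atom masses
  set p : ℕ → ℝ := fun i => (μ (E i)).toReal with hp
  have hp0 : ∀ i, 0 ≤ p i := fun i => ENNReal.toReal_nonneg
  have hEsum : ∑' i, μ (E i) = 1 := by rw [← measure_iUnion hEdis hEm]; exact hEU
  have hpsum : Summable p :=
    ENNReal.summable_toReal (by rw [hEsum]; exact ENNReal.one_ne_top)
  -- real cell formula
  have hq : ∀ (n : ℕ) (c : Fin n → Fin k),
      (μ (⋂ j : Fin n, P (j : ℕ) ⁻¹' {c j})).toReal =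
        ∑' i, (if (fun j : Fin n => f i (j : ℕ)) = c then p i else 0) := by
    intro n c
    rw [hcellμ n c, ENNReal.tsum_toReal_eq (fun i => measure_ne_top μ _)]
    refine tsum_congr fun i => ?_
    rw [hcell n c i]
    split <;> simp [hp]
  have hgnn : ∀ (n : ℕ) (i : ℕ) (c : Fin n → Fin k),
      0 ≤ (if (fun j : Fin n => f i (j : ℕ)) = c then p i else 0) := by
    intro n i c
    split
    · exact hp0 i
    · exact le_refl 0
  have hgle : ∀ (n : ℕ) (i : ℕ) (c : Fin n → Fin k),
      (if (fun j : Fin n => f i (j : ℕ)) = c then p i else 0) ≤ p i := by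
    intro n i c
    split
    · exact le_refl _
    · exact hp0 i
  have hgsum : ∀ (n : ℕ) (c : Fin n → Fin k),
      Summable (fun i => if (fun j : Fin n => f i (j : ℕ)) = c then p i else 0) :=
    fun n c => Summable.of_nonneg_of_le (fun i => hgnn n i c) (fun i => hgle n i c) hpsum
  -- the key entropy bound
  have hH : ∀ (N n : ℕ),
      joinEntropy μ P n ≤ (N + 1 : ℝ) + (∑' i, p (i + N)) * (n * Real.log k) := by
    intro N n
    haveI : Nonempty (Fin n → Fin k) := ⟨fun _ => hFk.some⟩
    set g : ℕ → (Fin n → Fin k) → ℝ :=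
      fun i c => if (fun j : Fin n => f i (j : ℕ)) = c then p i else 0 with hgdef
    set A : (Fin n → Fin k) → ℝ := fun c => ∑ i ∈ Finset.range N, g i c with hA
    set B : (Fin n → Fin k) → ℝ := fun c => ∑' i, g (i + N) c with hB
    have hsplit : ∀ c, (∑' i, g i c) = A c + B c :=
      fun c => (Summable.sum_add_tsum_nat_add N (hgsum n c)).symm
    have hA0 : ∀ c, 0 ≤ A c := fun c => Finset.sum_nonneg fun i _ => hgnn n i c
    have hB0 : ∀ c, 0 ≤ B c := fun c => tsum_nonneg fun i => hgnn n _ c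
    have step1 : joinEntropy μ P n ≤
        (∑ c : Fin n → Fin k, Real.negMulLog (A c)) +
        ∑ c : Fin n → Fin k, Real.negMulLog (B c) := by
      rw [joinEntropy, ← Finset.sum_add_distrib]
      refine Finset.sum_le_sum fun c _ => ?_
      rw [hq n c, hsplit c]
      exact negMulLog_add_le (hA0 c) (hB0 c)
    have stepA : (∑ c : Fin n → Fin k, Real.negMulLog (A c)) ≤ N := by
      set T : Finset (Fin n → Fin k) :=
        (Finset.range N).image (fun i => fun j : Fin n => f i (j : ℕ)) with hT
      have h1 : (∑ c : Fin n → Fin k, Real.negMulLog (A c))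
          = ∑ c ∈ T, Real.negMulLog (A c) := by
        refine (Finset.sum_subset (Finset.subset_univ T) fun c _ hc => ?_).symm
        have hz : A c = 0 := Finset.sum_eq_zero fun i hi => by
          rw [hgdef]
          dsimp only
          rw [if_neg]
          intro h
          exact hc (Finset.mem_image.2 ⟨i, hi, h⟩)
        rw [hz, Real.negMulLog_zero]
      rw [h1]
      calc ∑ c ∈ T, Real.negMulLog (A c) ≤ ∑ _c ∈ T, (1 : ℝ) :=
            Finset.sum_le_sum fun c _ => negMulLog_le_one (hA0 c)
        _ = T.card := by simp
        _ ≤ N := by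
            have := (Finset.card_image_le (s := Finset.range N)
              (f := fun i => fun j : Fin n => f i (j : ℕ))).trans
              (le_of_eq (Finset.card_range N))
            exact_mod_cast this
    have hone : ∀ i, (∑ c : Fin n → Fin k, g i c) = p i := by
      intro i
      rw [hgdef]
      simp
    have hS : (∑ c : Fin n → Fin k, B c) = ∑' i, p (i + N) := by
      rw [hB]
      dsimp only
      rw [← Summable.tsum_finsetSum (fun c _ => (summable_nat_add_iff N).2 (hgsum n c))]
      exact tsum_congr fun i => hone (i + N)
    have stepB : (∑ c : Fin n → Fin k, Real.negMulLog (B c)) ≤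
        1 + (∑' i, p (i + N)) * (n * Real.log k) := by
      have hj := sum_negMulLog_le B hB0
      rw [hS] at hj
      have hcard : Real.log (Fintype.card (Fin n → Fin k)) = n * Real.log k := by
        rw [Fintype.card_fun, Fintype.card_fin, Fintype.card_fin]
        push_cast
        rw [Real.log_pow]
      rw [hcard] at hj
      refine hj.trans (add_le_add ?_ (le_refl _))
      exact negMulLog_le_one (tsum_nonneg fun i => hp0 _)
    calc joinEntropy μ P n ≤ _ + _ := step1
      _ ≤ (N : ℝ) + (1 + (∑' i, p (i + N)) * (n * Real.log k)) := add_le_add stepA stepB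
      _ = (N + 1 : ℝ) + (∑' i, p (i + N)) * (n * Real.log k) := by ring
  -- entropy is nonnegative
  have hHnn : ∀ n, 0 ≤ joinEntropy μ P n := by
    intro n
    refine Finset.sum_nonneg fun c _ => ?_
    refine Real.negMulLog_nonneg ENNReal.toReal_nonneg ?_
    have h1 : μ (⋂ j : Fin n, P (j : ℕ) ⁻¹' {c j}) ≤ 1 := prob_le_one
    calc (μ (⋂ j : Fin n, P (j : ℕ) ⁻¹' {c j})).toReal
        ≤ (1 : ℝ≥0∞).toReal := ENNReal.toReal_mono ENNReal.one_ne_top h1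
      _ = 1 := ENNReal.toReal_one
  -- final limit argument
  rw [NormedAddCommGroup.tendsto_nhds_zero]
  intro δ hδ
  have hL : 0 ≤ Real.log k := Real.log_nonneg (by exact_mod_cast hk)
  set L := Real.log k with hLdef
  have hden : (0 : ℝ) < 2 * (L + 1) := by linarith
  set ε := δ / (2 * (L + 1)) with hεdef
  have hε0 : 0 < ε := div_pos hδ hden
  have htail : Filter.Tendsto (fun N => ∑' i, p (i + N)) Filter.atTop (nhds 0) :=
    tendsto_sum_nat_add p
  obtain ⟨N, hN⟩ := (htail.eventually (gt_mem_nhds hε0)).exists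
  have htail0 : 0 ≤ ∑' i, p (i + N) := tsum_nonneg fun i => hp0 _
  have h2 : Filter.Tendsto (fun n : ℕ => (N + 1 : ℝ) / n) Filter.atTop (nhds 0) :=
    tendsto_const_div_atTop_nhds_zero_nat _
  filter_upwards [h2.eventually (gt_mem_nhds (half_pos hδ)),
    Filter.eventually_ge_atTop 1] with n hn1 hn2
  have hn0 : (0 : ℝ) < n := by exact_mod_cast hn2
  have hfnn : 0 ≤ (1 / (n : ℝ)) * joinEntropy μ P n :=
    mul_nonneg (by positivity) (hHnn n)
  rw [Real.norm_eq_abs, abs_of_nonneg hfnn]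
  have htailL : (∑' i, p (i + N)) * L ≤ δ / 2 := by
    have h3 : (∑' i, p (i + N)) * L ≤ ε * L :=
      mul_le_mul_of_nonneg_right hN.le hL
    have h4 : ε * L ≤ ε * (L + 1) := by nlinarith
    have h5 : ε * (L + 1) = δ / 2 := by
      rw [hεdef]
      field_simp
    linarith
  calc (1 / (n : ℝ)) * joinEntropy μ P n
      ≤ (1 / (n : ℝ)) * ((N + 1 : ℝ) + (∑' i, p (i + N)) * (n * L)) :=
        mul_le_mul_of_nonneg_left (hH N n) (by positivity)
    _ = (N + 1 : ℝ) / n + (∑' i, p (i + N)) * L := by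
        field_simp
    _ < δ / 2 + δ / 2 := by
        have := htailL
        linarith
    _ = δ := add_halves δ
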